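/- arXiv:1801.02262 — 11 statements merged into one kernel-verified Lean document; each statement's English description precedes it below -/
import Mathlib

section
/- If a magic n-gon exists (n ≥ 3), then the sum of all numbers placed at nodes other than the center equals 2n² + 2n. -/
/-- A magic `n`-gon: values `v i` at vertices, `m i` at the midpoint of the side
between `v i` and `v (i+1)`, and `c` at the center, all drawn injectively from
`{1, ..., 2n+1}`, such that every side sums to `s` and every diagonal (through
the center) sums to `s`.  For even `n` the diagonals join opposite vertices and
opposite midpoints; for odd `n` they join each vertex to the opposite midpoint. -/
def IsMagicNGon (n : ℕ) [NeZero n] (v m : ZMod n → ℕ) (c s : ℕ) : Prop :=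
  Function.Injective (Sum.elim v (Sum.elim m (fun _ : Unit => c))) ∧
  (∀ i, v i ∈ Finset.Icc 1 (2 * n + 1)) ∧
  (∀ i, m i ∈ Finset.Icc 1 (2 * n + 1)) ∧
  c ∈ Finset.Icc 1 (2 * n + 1) ∧
  (∀ i, v i + m i + v (i + 1) = s) ∧
  (if n % 2 = 0
    then ∀ i, v i + c + v (i + (n / 2 : ℕ)) = s ∧ m i + c + m (i + (n / 2 : ℕ)) = s
    else ∀ i, v i + c + m (i + (n / 2 : ℕ)) = s)

lemma gauss_Icc (N : ℕ) : (∑ x ∈ Finset.Icc 1 N, x) * 2 = N * (N + 1) := by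
  induction N with
  | zero => simp
  | succ N ih =>
    rw [Finset.sum_Icc_succ_top (by omega), add_mul, ih]
    ring

theorem sum_noncenter (n : ℕ) [NeZero n] (hn : 3 ≤ n) (v m : ZMod n → ℕ) (c s : ℕ)
    (h : IsMagicNGon n v m c s) :
    (∑ i : ZMod n, v i) + (∑ i : ZMod n, m i) = 2 * n ^ 2 + 2 * n := by
  obtain ⟨hinj, hv, hm, hc, hside, hdiag⟩ := h
  set k : ZMod n := ((n / 2 : ℕ) : ZMod n) with hk
  -- total sum of all values
  have hcard : Fintype.card (ZMod n ⊕ (ZMod n ⊕ Unit)) = 2 * n + 1 := by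
    simp [ZMod.card]
    ring
  have himg : Finset.image (Sum.elim v (Sum.elim m (fun _ : Unit => c))) Finset.univ
      = Finset.Icc 1 (2 * n + 1) := by
    apply Finset.eq_of_subset_of_card_le
    · intro x hx
      simp only [Finset.mem_image, Finset.mem_univ, true_and] at hx
      obtain ⟨a, rfl⟩ := hx
      rcases a with i | i | ⟨⟩
      · exact hv i
      · exact hm i
      · exact hc
    · rw [Finset.card_image_of_injective _ hinj, Finset.card_univ, hcard, Nat.card_Icc]
      omega
  have hsum : (∑ i : ZMod n, v i) + ((∑ i : ZMod n, m i) + c)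
      = ∑ x ∈ Finset.Icc 1 (2 * n + 1), x := by
    rw [← himg, Finset.sum_image (fun x _ y _ hxy => hinj hxy)]
    rw [Fintype.sum_sum_type, Fintype.sum_sum_type]
    simp
  have hgauss := gauss_Icc (2 * n + 1)
  have hshift : ∀ (f : ZMod n → ℕ) (a : ZMod n), (∑ i : ZMod n, f (i + a)) = ∑ i : ZMod n, f i :=
    fun f a => Fintype.sum_equiv (Equiv.addRight a) _ _ (fun i => rfl)
  rcases Nat.even_or_odd n with he | ho
  · -- even case
    have he' : n % 2 = 0 := Nat.even_iff.mp he
    rw [if_pos he'] at hdiag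
    -- s = 3 * c
    have hs3c : s = 3 * c := by
      have d1 := (hdiag 0).1
      have d2 := (hdiag 0).2
      have d3 := (hdiag (0 + 1)).1
      have s1 := hside 0
      have s2 := hside (0 + k)
      have id1 : (0 : ZMod n) + 1 + k = 0 + k + 1 := by ring
      rw [id1] at d3
      omega
    have hT : (∑ _i : ZMod n, s) = 3 * ∑ _i : ZMod n, c := by
      rw [Finset.mul_sum]
      exact Finset.sum_congr rfl fun _ _ => hs3c
    have hS1 : (∑ i : ZMod n, v i) + (∑ i : ZMod n, m i) + (∑ i : ZMod n, v i)
        = ∑ _i : ZMod n, s := by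
      rw [← Finset.sum_add_distrib, ← hshift v 1, ← Finset.sum_add_distrib]
      exact Finset.sum_congr rfl fun i _ => hside i
    have hS2 : (∑ i : ZMod n, v i) + (∑ _i : ZMod n, c) + (∑ i : ZMod n, v i)
        = ∑ _i : ZMod n, s := by
      rw [← Finset.sum_add_distrib, ← hshift v k, ← Finset.sum_add_distrib]
      exact Finset.sum_congr rfl fun i _ => (hdiag i).1
    have hS3 : (∑ i : ZMod n, m i) + (∑ _i : ZMod n, c) + (∑ i : ZMod n, m i)
        = ∑ _i : ZMod n, s := by
      rw [← Finset.sum_add_distrib, ← hshift m k, ← Finset.sum_add_distrib]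
      exact Finset.sum_congr rfl fun i _ => (hdiag i).2
    have hCsum : (∑ _i : ZMod n, c) = n * c := by
      rw [Finset.sum_const, Finset.card_univ, ZMod.card, smul_eq_mul]
    have hA' : (∑ i : ZMod n, v i) = ∑ _i : ZMod n, c := by linarith
    have hB' : (∑ i : ZMod n, m i) = ∑ _i : ZMod n, c := by linarith
    have hA : (∑ i : ZMod n, v i) = n * c := by rw [hA', hCsum]
    have hB : (∑ i : ZMod n, m i) = n * c := by rw [hB', hCsum]
    -- determine c
    have hkey : (2 * n + 1) * (2 * c) = (2 * n + 1) * (2 * n + 2) := by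
      have h1 : (n * c + (n * c + c)) * 2 = (2 * n + 1) * (2 * c) := by ring
      have h2 : (2 * n + 1) * (2 * n + 1 + 1) = (2 * n + 1) * (2 * n + 2) := by ring
      rw [hA, hB] at hsum
      rw [← h1, hsum, hgauss]
    have hcval : c = n + 1 := by
      have h2c : 2 * c = 2 * n + 2 := Nat.eq_of_mul_eq_mul_left (by omega) hkey
      omega
    rw [hA, hB, hcval]
    ring
  · -- odd case: contradiction
    have ho2 : n % 2 = 1 := Nat.odd_iff.mp ho
    have ho' : ¬ n % 2 = 0 := by omega
    rw [if_neg ho'] at hdiag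
    have hn1 : (1:ℕ) ≤ n := by omega
    have hkk : k + k = -1 := by
      have h2 : n / 2 + n / 2 = n - 1 := by omega
      rw [hk, ← Nat.cast_add, h2, Nat.cast_sub hn1, ZMod.natCast_self, Nat.cast_one,
        zero_sub]
    have R : ∀ i : ZMod n, v i + v (i + 1) = v (i - k) + c := by
      intro i
      have e1 := hside i
      have e2 := hdiag (i - k)
      rw [sub_add_cancel] at e2
      omega
    have T : ∀ j : ZMod n, v j + v (j + 1) + v (j + 1 + 1) = 3 * c := by
      intro j
      have r1 := R j
      have r2 := R (j + 1)
      have r3 := R (j - k)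
      have id1 : j - k + 1 = j + 1 - k := by ring
      have id2 : j - k - k = j + 1 := by rw [sub_sub, hkk, sub_neg_eq_add]
      rw [id1, id2] at r3
      omega
    exfalso
    rcases eq_or_lt_of_le hn with h3 | h4
    · -- n = 3
      have h3' : n = 3 := h3.symm
      subst h3'
      have hk1 : (0 : ZMod 3) - k = 0 + 1 + 1 := by decide
      have r := R 0
      rw [hk1] at r
      have t := T 0
      have hvc : v (0 + 1 + 1) = c := by omega
      have := hinj (a₁ := Sum.inl (0 + 1 + 1)) (a₂ := Sum.inr (Sum.inr ())) hvc
      simp at this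
    · -- n > 3
      have p : v 0 = v (0 + 1 + 1 + 1) := by
        have t1 := T 0
        have t2 := T (0 + 1)
        omega
      have heq := hinj (a₁ := Sum.inl 0) (a₂ := Sum.inl (0 + 1 + 1 + 1)) p
      have h0 : (0 : ZMod n) = 0 + 1 + 1 + 1 := Sum.inl.inj heq
      have h3z : ((3 : ℕ) : ZMod n) = 0 := by
        push_cast
        linear_combination -h0
      rw [ZMod.natCast_eq_zero_iff] at h3z
      have := Nat.le_of_dvd (by norm_num) h3z
      omega
end

section
/- Let n ≥ 3 and c ∈ {1, ..., 2n+1}. If the 2n elements of {1,...,2n+1} \ {c} can be partitioned into n pairs all having the same sum, then c ∈ {1, n+1, 2n+1}. -/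
theorem center_candidates (n c : ℕ) (hn : 3 ≤ n) (hc : c ∈ Finset.Icc 1 (2 * n + 1))
    (h : ∃ s : ℕ, ∃ g : ℕ → ℕ, ∀ x ∈ (Finset.Icc 1 (2 * n + 1)).erase c,
        g x ∈ (Finset.Icc 1 (2 * n + 1)).erase c ∧ g x ≠ x ∧ g (g x) = x ∧ x + g x = s) :
    c = 1 ∨ c = n + 1 ∨ c = 2 * n + 1 := by
  obtain ⟨s, g, hg⟩ := h
  set S := (Finset.Icc 1 (2 * n + 1)).erase c with hS
  -- g is a bijection of S onto itself, so sums agree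
  have hsum_g : ∑ x ∈ S, g x = ∑ x ∈ S, x := by
    refine Finset.sum_bij' (fun a _ => g a) (fun a _ => g a)
      (fun a ha => (hg a ha).1) (fun a ha => (hg a ha).1)
      (fun a ha => (hg a ha).2.2.1) (fun a ha => (hg a ha).2.2.1)
      (fun a ha => rfl)
  have hcardIcc : (Finset.Icc 1 (2 * n + 1)).card = 2 * n + 1 := by
    rw [Nat.card_Icc]; omega
  have hcard : S.card = 2 * n := by
    rw [hS, Finset.card_erase_of_mem hc, hcardIcc]; omega
  have h2 : 2 * ∑ x ∈ S, x = 2 * n * s := by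
    have : ∑ x ∈ S, (x + g x) = ∑ x ∈ S, s := by
      apply Finset.sum_congr rfl
      intro x hx
      exact (hg x hx).2.2.2
    rw [Finset.sum_add_distrib, hsum_g, Finset.sum_const, smul_eq_mul, hcard] at this
    linarith [this]
  -- total sum of Icc 1 (2n+1)
  have htot : 2 * ∑ x ∈ Finset.Icc 1 (2 * n + 1), x = (2 * n + 1) * (2 * n + 2) := by
    have hr : Finset.range (2 * n + 2) = insert 0 (Finset.Icc 1 (2 * n + 1)) := by
      ext x; simp; omega
    have h0 : (0 : ℕ) ∉ Finset.Icc 1 (2 * n + 1) := by simp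
    have := Finset.sum_range_id_mul_two (2 * n + 2)
    rw [hr, Finset.sum_insert h0] at this
    simpa [mul_comm] using this
  have herase : ∑ x ∈ S, x + c = ∑ x ∈ Finset.Icc 1 (2 * n + 1), x :=
    Finset.sum_erase_add _ _ hc
  -- key equation
  have hkey : 2 * n * s + 2 * c = (2 * n + 1) * (2 * n + 2) := by
    omega
  simp only [Finset.mem_Icc] at hc
  -- bound s
  have hs1 : 2 * n ≤ s := by nlinarith
  have hs2 : s ≤ 2 * n + 3 := by nlinarith
  have hcases : s = 2 * n ∨ s = 2 * n + 1 ∨ s = 2 * n + 2 ∨ s = 2 * n + 3 := by omega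
  rcases hcases with rfl | rfl | rfl | rfl
  · exfalso; nlinarith [hc.1, hc.2]
  · right; right; nlinarith [hkey]
  · right; left; nlinarith [hkey]
  · left; nlinarith [hkey]
end

section
/- For n ≥ 3, if the center of a magic n-gon were c = 1 (so the magic sum would be m = 2n + 4), then the diagonal containing the value 2 would force two distinct values from {3, ..., 2n} to sum to 3, which is impossible. Hence c ≠ 1. -/
theorem center_ne_one (n : ℕ) [NeZero n] (hn : 3 ≤ n) :
    (∀ a b : ℕ, a ∈ Finset.Icc 3 (2 * n) → b ∈ Finset.Icc 3 (2 * n) → a ≠ b → a + b ≠ 3) ∧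
    (∀ (v m : ZMod n → ℕ) (c s : ℕ), IsMagicNGon n v m c s → c ≠ 1) := by
  constructor
  · intro a b ha hb hab
    simp only [Finset.mem_Icc] at ha hb
    omega
  · rintro v m c s ⟨hinj, hv, hm, hc, hside, hdiag⟩ hc1
    subst hc1
    set f := Sum.elim v (Sum.elim m (fun _ : Unit => (1 : ℕ))) with hf
    -- the image of f is exactly Icc 1 (2n+1)
    have hmem : ∀ x, f x ∈ Finset.Icc 1 (2 * n + 1) := by
      rintro (i | i | ⟨⟩)
      · exact hv i
      · exact hm i
      · exact hc
    have hcard : Fintype.card (ZMod n ⊕ (ZMod n ⊕ Unit)) = 2 * n + 1 := by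
      simp [ZMod.card]; ring
    have himg : Finset.univ.image f = Finset.Icc 1 (2 * n + 1) := by
      apply Finset.eq_of_subset_of_card_le
      · intro x hx
        obtain ⟨a, _, rfl⟩ := Finset.mem_image.mp hx
        exact hmem a
      · rw [Finset.card_image_of_injective _ hinj, Finset.card_univ, hcard,
          Nat.card_Icc]
        omega
    -- total sum
    have htot : ∑ x, f x = ∑ k ∈ Finset.Icc 1 (2 * n + 1), k := by
      rw [← himg, Finset.sum_image (fun x _ y _ h => hinj h)]
    have hrange : Finset.range (2 * n + 2) = insert 0 (Finset.Icc 1 (2 * n + 1)) := by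
      ext k; simp [Finset.mem_Icc]; omega
    have hgauss : (∑ k ∈ Finset.Icc 1 (2 * n + 1), k) * 2 = (2 * n + 2) * (2 * n + 1) := by
      have h0 : (∑ k ∈ Finset.range (2 * n + 2), k) = ∑ k ∈ Finset.Icc 1 (2 * n + 1), k := by
        rw [hrange, Finset.sum_insert (by simp)]
        exact zero_add _
      rw [← h0, Finset.sum_range_id_mul_two]
      simp
    have hsplit : ∑ x, f x = (∑ i, v i) + (∑ i, m i) + 1 := by
      rw [hf]
      rw [Fintype.sum_sum_type, Fintype.sum_sum_type]
      simp [add_assoc]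
    -- reindexing sums over ZMod n
    have hshift : ∀ (g : ZMod n → ℕ) (k : ZMod n), (∑ i, g (i + k)) = ∑ i, g i :=
      fun g k => Fintype.sum_equiv (Equiv.addRight k) _ _ (fun i => rfl)
    -- the diagonal equations give n * s = Σv + Σm + n
    have hns : n * s = (∑ i, v i) + (∑ i, m i) + n := by
      by_cases hpar : n % 2 = 0
      · rw [if_pos hpar] at hdiag
        have h1 : ∑ i, (v i + 1 + v (i + (n / 2 : ℕ))) = n * s := by
          rw [Finset.sum_congr rfl (fun i _ => (hdiag i).1)]
          simp [Finset.card_univ, ZMod.card, mul_comm]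
        have h2 : ∑ i, (m i + 1 + m (i + (n / 2 : ℕ))) = n * s := by
          rw [Finset.sum_congr rfl (fun i _ => (hdiag i).2)]
          simp [Finset.card_univ, ZMod.card, mul_comm]
        rw [Finset.sum_add_distrib, Finset.sum_add_distrib, hshift] at h1 h2
        simp only [Finset.sum_const, Finset.card_univ, ZMod.card, smul_eq_mul, mul_one] at h1 h2
        omega
      · rw [if_neg hpar] at hdiag
        have h1 : ∑ i, (v i + 1 + m (i + (n / 2 : ℕ))) = n * s := by
          rw [Finset.sum_congr rfl (fun i _ => hdiag i)]
          simp [Finset.card_univ, ZMod.card, mul_comm]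
        rw [Finset.sum_add_distrib, Finset.sum_add_distrib, hshift] at h1
        simp only [Finset.sum_const, Finset.card_univ, ZMod.card, smul_eq_mul, mul_one] at h1
        omega
    -- hence s = 2n + 4
    have hT : ((∑ i, v i) + (∑ i, m i) + 1) * 2 = (2 * n + 2) * (2 * n + 1) := by
      rw [← hsplit, htot, hgauss]
    have hs : s = 2 * n + 4 := by
      have key : n * s = n * (2 * n + 4) := by nlinarith [hT, hns]
      exact Nat.eq_of_mul_eq_mul_left (Nat.pos_of_ne_zero (NeZero.ne n)) key
    -- 2n+1 is attained
    have h2n1 : (2 * n + 1) ∈ Finset.univ.image f := by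
      rw [himg, Finset.mem_Icc]; omega
    obtain ⟨x, _, hx⟩ := Finset.mem_image.mp h2n1
    -- injectivity: no v or m value equals 1
    have hvne : ∀ i, v i ≠ 1 := by
      intro i h
      have : (Sum.inl i : ZMod n ⊕ (ZMod n ⊕ Unit)) = Sum.inr (Sum.inr ()) :=
        hinj (by simp [hf, h])
      simp at this
    have hmne : ∀ i, m i ≠ 1 := by
      intro i h
      have : (Sum.inr (Sum.inl i) : ZMod n ⊕ (ZMod n ⊕ Unit)) = Sum.inr (Sum.inr ()) :=
        hinj (by simp [hf, h])
      simp at this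
    rcases x with j | j | ⟨⟩
    · -- v j = 2n+1
      have h1 := hside j
      have h2 := hv j
      have h3 := hm j
      have h4 := hv (j + 1)
      have h5 := hvne (j + 1)
      have h6 := hmne j
      simp only [Finset.mem_Icc] at h2 h3 h4
      simp only [hf, Sum.elim_inl] at hx
      omega
    · -- m j = 2n+1
      have h1 := hside j
      have h2 := hv j
      have h4 := hv (j + 1)
      have h5 := hvne (j + 1)
      have h6 := hvne j
      simp only [Finset.mem_Icc] at h2 h4
      simp only [hf, Sum.elim_inr, Sum.elim_inl] at hx
      omega
    · simp only [hf, Sum.elim_inr] at hx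
      omega
end

section
/- For n ≥ 3, if the center of a magic n-gon were c = 2n+1 (so the magic sum would be m = 4n + 2), then the diagonal containing the value 1 would force two distinct values from {2, ..., 2n-1} to sum to 4n+1, which is impossible since their maximum sum is 4n - 3. Hence c ≠ 2n+1. -/
theorem center_ne_top (n : ℕ) [NeZero n] (hn : 3 ≤ n) :
    (∀ a b : ℕ, a ∈ Finset.Icc 2 (2 * n - 1) → b ∈ Finset.Icc 2 (2 * n - 1) → a ≠ b →
      a + b ≤ 4 * n - 3 ∧ a + b ≠ 4 * n + 1) ∧
    (∀ (v m : ZMod n → ℕ) (c s : ℕ), IsMagicNGon n v m c s → c ≠ 2 * n + 1) := by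
  constructor
  · intro a b ha hb hab
    simp only [Finset.mem_Icc] at ha hb
    omega
  · rintro v m c s ⟨hinj, hv, hm, hc, hside, hdiag⟩ hceq
    subst hceq
    set f := Sum.elim v (Sum.elim m (fun _ : Unit => 2 * n + 1)) with hf
    -- the image of f is all of Icc 1 (2n+1)
    have hcard : Fintype.card (ZMod n ⊕ (ZMod n ⊕ Unit)) = 2 * n + 1 := by
      simp [ZMod.card]
      omega
    have himg : Finset.image f Finset.univ = Finset.Icc 1 (2 * n + 1) := by
      apply Finset.eq_of_subset_of_card_le
      · intro x hx
        simp only [Finset.mem_image, Finset.mem_univ, true_and] at hx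
        obtain ⟨y, rfl⟩ := hx
        rcases y with i | i | u
        · exact hv i
        · exact hm i
        · exact hc
      · rw [Finset.card_image_of_injective _ hinj, Finset.card_univ, hcard, Nat.card_Icc]
        omega
    -- Gauss sum
    have hgauss : ∑ x ∈ Finset.Icc 1 (2 * n + 1), x = (n + 1) * (2 * n + 1) := by
      have h1 : ∑ x ∈ Finset.Icc 1 (2 * n + 1), x = ∑ x ∈ Finset.range (2 * n + 2), x := by
        apply Finset.sum_subset
        · intro x hx
          simp only [Finset.mem_Icc] at hx
          simp only [Finset.mem_range]
          omega
        · intro x hx hnx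
          simp only [Finset.mem_range] at hx
          simp only [Finset.mem_Icc] at hnx
          omega
      rw [h1]
      have h2 := Finset.sum_range_id_mul_two (2 * n + 2)
      have h3 : (2 * n + 2) * (2 * n + 2 - 1) = (n + 1) * (2 * n + 1) * 2 := by
        have e : 2 * n + 2 - 1 = 2 * n + 1 := by omega
        rw [e]; ring
      omega
    -- total sum of all the values
    have htot : (∑ i, v i) + ((∑ i, m i) + (2 * n + 1)) = (n + 1) * (2 * n + 1) := by
      have h1 : ∑ x ∈ Finset.image f Finset.univ, x = ∑ x, f x :=
        Finset.sum_image (fun a _ b _ h => hinj h)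
      rw [himg, hgauss] at h1
      rw [h1, hf, Fintype.sum_sum_type, Fintype.sum_sum_type]
      simp
    -- shifting the index does not change a sum
    have hshift : ∀ (g : ZMod n → ℕ) (k : ZMod n), ∑ i, g (i + k) = ∑ i, g i := by
      intro g k
      exact Equiv.sum_comp (Equiv.addRight k) g
    have hconst : ∀ t : ℕ, ∑ _i : ZMod n, t = n * t := by
      intro t
      rw [Finset.sum_const, Finset.card_univ, ZMod.card, smul_eq_mul]
    -- sum of the side equations
    have hS : (∑ i, v i) + (∑ i, m i) + (∑ i, v i) = n * s := by
      have h := Fintype.sum_congr _ _ hside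
      rwa [Finset.sum_add_distrib, Finset.sum_add_distrib, hshift v 1, hconst s] at h
    have hmpos : n ≤ ∑ i, m i := by
      calc n = ∑ _i : ZMod n, 1 := (hconst 1).trans (by ring) |>.symm
        _ ≤ ∑ i, m i := Finset.sum_le_sum (fun i _ => (Finset.mem_Icc.mp (hm i)).1)
    have hvpos : n ≤ ∑ i, v i := by
      calc n = ∑ _i : ZMod n, 1 := (hconst 1).trans (by ring) |>.symm
        _ ≤ ∑ i, v i := Finset.sum_le_sum (fun i _ => (Finset.mem_Icc.mp (hv i)).1)
    obtain ⟨S, hSdef⟩ : ∃ S, n * s = S := ⟨_, rfl⟩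
    rw [hSdef] at hS
    have hnc : n * (2 * n + 1) = 2 * (n * n) + n := by ring
    have hn1 : (n + 1) * (2 * n + 1) = 2 * (n * n) + 3 * n + 1 := by ring
    obtain ⟨q, hqdef⟩ : ∃ q, n * n = q := ⟨_, rfl⟩
    rw [hqdef] at hnc hn1
    by_cases hpar : n % 2 = 0
    · rw [if_pos hpar] at hdiag
      have hd1 : (∑ i, v i) + n * (2 * n + 1) + (∑ i, v i) = S := by
        have h := Fintype.sum_congr _ _ (fun i => (hdiag i).1)
        rwa [Finset.sum_add_distrib, Finset.sum_add_distrib, hshift v _,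
          hconst (2 * n + 1), hconst s, hSdef] at h
      have hd2 : (∑ i, m i) + n * (2 * n + 1) + (∑ i, m i) = S := by
        have h := Fintype.sum_congr _ _ (fun i => (hdiag i).2)
        rwa [Finset.sum_add_distrib, Finset.sum_add_distrib, hshift m _,
          hconst (2 * n + 1), hconst s, hSdef] at h
      omega
    · rw [if_neg hpar] at hdiag
      have hd : (∑ i, v i) + n * (2 * n + 1) + (∑ i, m i) = S := by
        have h := Fintype.sum_congr _ _ hdiag
        rwa [Finset.sum_add_distrib, Finset.sum_add_distrib, hshift m _,
          hconst (2 * n + 1), hconst s, hSdef] at h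
      omega
end

section
/- For n ≥ 3: if a magic n-gon exists, then its center value is n + 1. -/
lemma sumIcc_gauss (N : ℕ) : (∑ y ∈ Finset.Icc 1 N, y) * 2 = N * (N + 1) := by
  induction N with
  | zero => simp
  | succ k ih =>
    rw [Finset.sum_Icc_succ_top (by omega)]
    nlinarith [ih]

lemma inj_ne {α β : Type*} {f : α → β} (h : Function.Injective f) {x y : α}
    (hxy : x ≠ y) : f x ≠ f y := fun he => hxy (h he)

lemma total_sum (n : ℕ) [NeZero n] (f : ZMod n ⊕ (ZMod n ⊕ Unit) → ℕ)
    (hinj : Function.Injective f) (hmem : ∀ x, f x ∈ Finset.Icc 1 (2 * n + 1)) :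
    (∑ x, f x) * 2 = (2 * n + 1) * (2 * n + 2) := by
  have card_eq : Fintype.card (ZMod n ⊕ (ZMod n ⊕ Unit)) = 2 * n + 1 := by
    simp [ZMod.card]; omega
  have himage : Finset.image f Finset.univ = Finset.Icc 1 (2 * n + 1) := by
    apply Finset.eq_of_subset_of_card_le
    · intro y hy
      obtain ⟨x, -, rfl⟩ := Finset.mem_image.mp hy
      exact hmem x
    · rw [Finset.card_image_of_injective _ hinj, Nat.card_Icc, Finset.card_univ, card_eq]
      omega
  have hs : ∑ y ∈ Finset.Icc 1 (2 * n + 1), y = ∑ x, f x := by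
    rw [← himage, Finset.sum_image (fun x _ y _ h => hinj h)]
  rw [← hs, sumIcc_gauss]

theorem center_eq (n : ℕ) [NeZero n] (hn : 3 ≤ n) (v m : ZMod n → ℕ) (c s : ℕ)
    (h : IsMagicNGon n v m c s) : c = n + 1 := by
  obtain ⟨hinj, hv, hm, hc, hside, hdiag⟩ := h
  -- total sum
  have hmem : ∀ x, Sum.elim v (Sum.elim m (fun _ : Unit => c)) x ∈ Finset.Icc 1 (2 * n + 1) := by
    rintro (x | x | x) <;> simp [hv, hm, hc]
  have htot0 := total_sum n (Sum.elim v (Sum.elim m (fun _ : Unit => c))) hinj hmem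
  have htot : ((∑ i, v i) + ((∑ i, m i) + c)) * 2 = (2 * n + 1) * (2 * n + 2) := by
    simpa [Fintype.sum_sum_type] using htot0
  -- shift invariance of sums
  have hshift : ∀ (g : ZMod n → ℕ) (d : ZMod n), ∑ i, g (i + d) = ∑ i, g i :=
    fun g d => Equiv.sum_comp (Equiv.addRight d) g
  have hconst : ∀ a : ℕ, ∑ _i : ZMod n, a = n * a := by
    intro a
    simp [Finset.card_univ, ZMod.card, mul_comm]
  -- side sums
  have hsides : (∑ i, v i) + (∑ i, m i) + (∑ i, v i) = n * s := by
    have h0 : ∑ i, (v i + m i + v (i + 1)) = ∑ _i : ZMod n, s :=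
      Finset.sum_congr rfl (fun i _ => hside i)
    rw [Finset.sum_add_distrib, Finset.sum_add_distrib, hshift v 1, hconst s] at h0
    exact h0
  rcases Nat.even_or_odd n with hpar | hpar
  · -- even case
    rw [if_pos (Nat.even_iff.mp hpar)] at hdiag
    have h1 : (∑ i, v i) + n * c + (∑ i, v i) = n * s := by
      have h0 : ∑ i, (v i + c + v (i + ((n / 2 : ℕ) : ZMod n))) = ∑ _i : ZMod n, s :=
        Finset.sum_congr rfl (fun i _ => (hdiag i).1)
      rw [Finset.sum_add_distrib, Finset.sum_add_distrib, hshift v _, hconst c, hconst s] at h0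
      exact h0
    have h2 : (∑ i, m i) + n * c + (∑ i, m i) = n * s := by
      have h0 : ∑ i, (m i + c + m (i + ((n / 2 : ℕ) : ZMod n))) = ∑ _i : ZMod n, s :=
        Finset.sum_congr rfl (fun i _ => (hdiag i).2)
      rw [Finset.sum_add_distrib, Finset.sum_add_distrib, hshift m _, hconst c, hconst s] at h0
      exact h0
    set V := ∑ i, v i with hV
    set M := ∑ i, m i with hM
    -- V = M = n * c
    have hMnc : M = n * c := by
      have := hsides.trans h1.symm
      omega
    have hVnc : V = n * c := by
      have := h1.trans h2.symm
      omega
    rw [hVnc, hMnc] at htot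
    -- now (n*c + (n*c + c)) * 2 = (2n+1)(2n+2)
    have hZ : ((2 * (n : ℤ) + 1) * 2) * c = ((2 * (n : ℤ) + 1) * 2) * (n + 1) := by
      have h3 := congrArg (Nat.cast : ℕ → ℤ) htot
      push_cast at h3
      linarith [h3]
    have hc' : (c : ℤ) = (n : ℤ) + 1 := by
      have hne : ((2 * (n : ℤ) + 1) * 2) ≠ 0 := by positivity
      exact mul_left_cancel₀ hne hZ
    exact_mod_cast hc'
  · -- odd case
    have hodd : n % 2 = 1 := Nat.odd_iff.mp hpar
    rw [if_neg (by omega : ¬ n % 2 = 0)] at hdiag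
    set K : ZMod n := ((n / 2 : ℕ) : ZMod n) with hK
    have hKK : K + K + 1 = 0 := by
      have h0 : (((n / 2 : ℕ) + (n / 2 : ℕ) + 1 : ℕ) : ZMod n) = 0 := by
        rw [show n / 2 + n / 2 + 1 = n by omega, ZMod.natCast_self]
      push_cast at h0
      rw [hK]
      exact h0
    have eK1 : ∀ j : ZMod n, j + K + 1 + K = j := by
      intro j
      have : j + K + 1 + K = j + (K + K + 1) := by ring
      rw [this, hKK, add_zero]
    have eK2 : ∀ j : ZMod n, j + K + 1 + K + 1 = j + 1 := by
      intro j
      rw [eK1 j]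
    have step1 : ∀ j : ZMod n, v j + v (j + 1) = v (j + K + 1) + c := by
      intro j
      have h1 := hside j
      have h2 := hdiag (j + K + 1)
      rw [eK1 j] at h2
      omega
    have step2 : ∀ j : ZMod n, v j + v (j + 1) + v (j + 1 + 1) = 3 * c := by
      intro j
      have a := step1 j
      have b := step1 (j + 1)
      have cc := step1 (j + K + 1)
      rw [show j + 1 + K + 1 = j + K + 1 + 1 by ring] at b
      rw [eK2 j] at cc
      omega
    have step3 : v 0 = v (1 + 1 + 1 : ZMod n) := by
      have a := step2 0
      have b := step2 1
      rw [zero_add] at a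
      omega
    rcases eq_or_ne n 3 with h3 | h3
    · -- n = 3 : concrete case
      subst h3
      have e1 : K = 1 := by rw [hK]; decide
      rw [e1] at hdiag
      have s0 := hside 0
      have s1 := hside 1
      have s2 := hside 2
      have d0 := hdiag 0
      have d1 := hdiag 1
      have d2 := hdiag 2
      rw [show (0 : ZMod 3) + 1 = 1 by decide] at s0 d0
      rw [show (1 : ZMod 3) + 1 = 2 by decide] at s1 d1
      rw [show (2 : ZMod 3) + 1 = 0 by decide] at s2 d2
      have bv0 := Finset.mem_Icc.mp (hv 0)
      have bv1 := Finset.mem_Icc.mp (hv 1)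
      have bv2 := Finset.mem_Icc.mp (hv 2)
      have bm0 := Finset.mem_Icc.mp (hm 0)
      have bm1 := Finset.mem_Icc.mp (hm 1)
      have bm2 := Finset.mem_Icc.mp (hm 2)
      have bc := Finset.mem_Icc.mp hc
      have t : ∑ i : ZMod 3, v i = v 0 + v 1 + v 2 := by
        show ∑ i : Fin 3, v i = _
        exact Fin.sum_univ_three v
      have t' : ∑ i : ZMod 3, m i = m 0 + m 1 + m 2 := by
        show ∑ i : Fin 3, m i = _
        exact Fin.sum_univ_three m
      rw [t, t'] at htot
      have nv01 : v 0 ≠ v 1 := inj_ne hinj (x := Sum.inl 0) (y := Sum.inl 1) (by decide)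
      have nv02 : v 0 ≠ v 2 := inj_ne hinj (x := Sum.inl 0) (y := Sum.inl 2) (by decide)
      have nv12 : v 1 ≠ v 2 := inj_ne hinj (x := Sum.inl 1) (y := Sum.inl 2) (by decide)
      have nvc0 : v 0 ≠ c := inj_ne hinj (x := Sum.inl 0) (y := Sum.inr (Sum.inr ())) (by decide)
      have nvc1 : v 1 ≠ c := inj_ne hinj (x := Sum.inl 1) (y := Sum.inr (Sum.inr ())) (by decide)
      have nvc2 : v 2 ≠ c := inj_ne hinj (x := Sum.inl 2) (y := Sum.inr (Sum.inr ())) (by decide)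
      omega
    · -- n ≥ 5 odd : contradiction
      exfalso
      have h30 := @hinj (Sum.inl (0 : ZMod n)) (Sum.inl ((1 : ZMod n) + 1 + 1)) step3
      have h31 : ((3 : ℕ) : ZMod n) = 0 := by
        have h32 : (0 : ZMod n) = 1 + 1 + 1 := by
          simpa using h30
        have h33 : ((3 : ℕ) : ZMod n) = 1 + 1 + 1 := by push_cast; ring
        rw [h33, ← h32]
      have hdvd : n ∣ 3 := (ZMod.natCast_eq_zero_iff 3 n).mp h31
      have := Nat.le_of_dvd (by norm_num) hdvd
      omega
end

section
/- For n ≥ 3: if a magic n-gon exists, then its magic sum is 3n + 3. -/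
lemma shift_sum {n : ℕ} [NeZero n] (f : ZMod n → ℕ) (a : ZMod n) :
    ∑ i, f (i + a) = ∑ i, f i :=
  Fintype.sum_equiv (Equiv.addRight a) _ _ (fun i => rfl)

theorem magic_sum_eq (n : ℕ) [NeZero n] (hn : 3 ≤ n) (v m : ZMod n → ℕ) (c s : ℕ)
    (h : IsMagicNGon n v m c s) : s = 3 * n + 3 := by
  obtain ⟨hinj, hv, hm, hc, hside, hdiag⟩ := h
  set F := Sum.elim v (Sum.elim m (fun _ : Unit => c)) with hF
  -- total sum
  have himg : Finset.univ.image F = Finset.Icc 1 (2 * n + 1) := by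
    apply Finset.eq_of_subset_of_card_le
    · intro x hx
      simp only [Finset.mem_image, Finset.mem_univ, true_and] at hx
      obtain ⟨y, rfl⟩ := hx
      rcases y with i | i | _
      · exact hv i
      · exact hm i
      · exact hc
    · rw [Finset.card_image_of_injective _ hinj, Finset.card_univ, Nat.card_Icc]
      simp [ZMod.card]
      omega
  have htot : (∑ i, v i) + ((∑ i, m i) + c) = (n + 1) * (2 * n + 1) := by
    have h1 : ∑ x ∈ Finset.univ.image F, x = ∑ y, F y :=
      Finset.sum_image (fun a _ b _ hab => hinj hab)
    rw [himg] at h1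
    have h2 : (∑ x ∈ Finset.Icc 1 (2 * n + 1), x) * 2 = (2 * n + 1) * (2 * n + 2) :=
      gauss_Icc _
    have h3 : ∑ y, F y = (∑ i, v i) + ((∑ i, m i) + c) := by
      rw [hF, Fintype.sum_sum_type, Fintype.sum_sum_type]
      simp
    nlinarith [h1, h2, h3]
  -- sum of sides
  have hS : 2 * (∑ i, v i) + (∑ i, m i) = n * s := by
    have : ∑ i, (v i + m i + v (i + 1)) = ∑ _i : ZMod n, s := by
      exact Finset.sum_congr rfl (fun i _ => hside i)
    rw [Finset.sum_add_distrib, Finset.sum_add_distrib, shift_sum v 1] at this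
    simp only [Finset.sum_const, Finset.card_univ, ZMod.card, smul_eq_mul] at this
    omega
  set V := ∑ i, v i
  set M := ∑ i, m i
  by_cases hpar : n % 2 = 0
  · -- even case
    rw [if_pos hpar] at hdiag
    have hDv : 2 * V + n * c = n * s := by
      have : ∑ i, (v i + c + v (i + (n / 2 : ℕ))) = ∑ _i : ZMod n, s :=
        Finset.sum_congr rfl (fun i _ => (hdiag i).1)
      rw [Finset.sum_add_distrib, Finset.sum_add_distrib, shift_sum v _] at this
      simp only [Finset.sum_const, Finset.card_univ, ZMod.card, smul_eq_mul] at this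
      omega
    have hDm : 2 * M + n * c = n * s := by
      have : ∑ i, (m i + c + m (i + (n / 2 : ℕ))) = ∑ _i : ZMod n, s :=
        Finset.sum_congr rfl (fun i _ => (hdiag i).2)
      rw [Finset.sum_add_distrib, Finset.sum_add_distrib, shift_sum m _] at this
      simp only [Finset.sum_const, Finset.card_univ, ZMod.card, smul_eq_mul] at this
      omega
    -- M = n c, V = n c
    have hM : M = n * c := by omega
    have hV : 2 * V = 2 * (n * c) := by
      have h1 : n * s = 3 * (n * c) := by omega
      omega
    have hcnc : (2 * n + 1) * c = (2 * n + 1) * (n + 1) := by nlinarith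
    have hcval : c = n + 1 := by
      have := Nat.eq_of_mul_eq_mul_left (show 0 < 2 * n + 1 by omega) hcnc
      omega
    have : n * s = n * (3 * n + 3) := by subst hcval; nlinarith
    exact Nat.eq_of_mul_eq_mul_left (by omega) this
  · -- odd case
    rw [if_neg hpar] at hdiag
    have hD : V + (M + n * c) = n * s := by
      have : ∑ i, (v i + c + m (i + (n / 2 : ℕ))) = ∑ _i : ZMod n, s :=
        Finset.sum_congr rfl (fun i _ => hdiag i)
      rw [Finset.sum_add_distrib, Finset.sum_add_distrib, shift_sum m _] at this
      simp only [Finset.sum_const, Finset.card_univ, ZMod.card, smul_eq_mul] at this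
      omega
    -- key equation: n*s + c = 2n^2+3n+1 + n*c
    have hkey : n * s + c = 2 * n * n + 3 * n + 1 + n * c := by nlinarith
    -- recurrence: v i + v (i+1) = v (i - (n/2)) + c
    have hrec : ∀ i : ZMod n, v i + v (i + 1) = v (i - (n / 2 : ℕ)) + c := by
      intro i
      have h1 := hdiag (i - (n / 2 : ℕ))
      rw [sub_add_cancel] at h1
      have h2 := hside i
      omega
    have hne : ∀ i : ZMod n, v i ≠ c := by
      intro i hi
      have : (Sum.inl i : ZMod n ⊕ (ZMod n ⊕ Unit)) = Sum.inr (Sum.inr ()) :=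
        hinj (by simpa [hF] using hi)
      simp at this
    have hc1 : c ≠ 1 := by
      intro hc1
      obtain ⟨i, -, hmax⟩ := Finset.exists_max_image Finset.univ v ⟨0, Finset.mem_univ 0⟩
      have h1 := hrec i
      have h2 := hmax (i - (n / 2 : ℕ)) (Finset.mem_univ _)
      have h3 := (Finset.mem_Icc.mp (hv (i + 1))).1
      have : v (i + 1) = c := by omega
      exact hne _ this
    have hc2 : c ≠ 2 * n + 1 := by
      intro hc2
      obtain ⟨i, -, hmin⟩ := Finset.exists_min_image Finset.univ v ⟨0, Finset.mem_univ 0⟩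
      have h1 := hrec i
      have h2 := hmin (i - (n / 2 : ℕ)) (Finset.mem_univ _)
      have h3 := (Finset.mem_Icc.mp (hv (i + 1))).2
      have : v (i + 1) = c := by omega
      exact hne _ this
    -- c ≡ 1 mod n
    have hmod : c % n = 1 % n := by
      have := congrArg (· % n) hkey
      simpa [Nat.add_mul_mod_self_left, Nat.mul_mod_right, Nat.add_mod, Nat.mul_mod_left]
        using this
    have hcle := (Finset.mem_Icc.mp hc).2
    have hcge := (Finset.mem_Icc.mp hc).1
    have h1n : 1 % n = 1 := Nat.mod_eq_of_lt (by omega)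
    rw [h1n] at hmod
    have hdecomp : c = n * (c / n) + 1 := by
      conv_lhs => rw [← Nat.div_add_mod c n]
      omega
    have ht : c / n ≤ 2 := by
      by_contra hgt
      have : 3 * n ≤ n * (c / n) := by
        calc 3 * n = n * 3 := by ring
        _ ≤ n * (c / n) := Nat.mul_le_mul_left n (by omega)
      omega
    have hcval : c = n + 1 := by
      interval_cases h : c / n <;> omega
    subst hcval
    have : n * s = n * (3 * n + 3) := by nlinarith
    exact Nat.eq_of_mul_eq_mul_left (by omega) this
end

section
/- For every odd n ≥ 3, no magic n-gon exists. -/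
theorem no_odd_magic_ngon (n : ℕ) [NeZero n] (hn : 3 ≤ n) (hodd : Odd n) :
    ¬ ∃ (v m : ZMod n → ℕ) (c s : ℕ), IsMagicNGon n v m c s := by
  rintro ⟨v, m, c, s, hinj, hv, hm, hc, hside, hdiag⟩
  obtain ⟨k, hk⟩ := hodd
  have hn2 : n % 2 = 1 := Nat.odd_iff.mp ⟨k, hk⟩
  rw [if_neg (by omega)] at hdiag
  have hkdiv : n / 2 = k := by omega
  rw [hkdiv] at hdiag
  -- key recurrence on vertices
  have key : ∀ i : ZMod n, v i + v (i + 1) = c + v (i + ((k + 1 : ℕ) : ZMod n)) := by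
    intro i
    have h1 := hside i
    have h2 := hdiag (i + ((k + 1 : ℕ) : ZMod n))
    have harg : i + ((k + 1 : ℕ) : ZMod n) + ((k : ℕ) : ZMod n) = i := by
      have : (((k + 1 : ℕ) : ZMod n) + ((k : ℕ) : ZMod n)) = ((n : ℕ) : ZMod n) := by
        rw [← Nat.cast_add]; congr 1; omega
      rw [add_assoc, this, ZMod.natCast_self, add_zero]
    rw [harg] at h2
    omega
  -- reindexed integer sequence
  set u : ℕ → ℤ := fun t => (v (((k + 1) * t : ℕ) : ZMod n) : ℤ) - c with hu
  have hrec : ∀ t : ℕ, u t + u (t + 2) = u (t + 1) := by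
    intro t
    have h := key (((k + 1) * t : ℕ) : ZMod n)
    have e2 : ((((k + 1) * (t + 2) : ℕ)) : ZMod n) = (((k + 1) * t : ℕ) : ZMod n) + 1 := by
      have : (k + 1) * (t + 2) = (k + 1) * t + 1 + n := by rw [hk]; ring
      rw [this]
      push_cast [ZMod.natCast_self]
      ring
    have e1 : ((((k + 1) * (t + 1) : ℕ)) : ZMod n)
        = (((k + 1) * t : ℕ) : ZMod n) + ((k + 1 : ℕ) : ZMod n) := by
      push_cast
      ring
    simp only [hu, e1, e2]
    have hz : (v ((((k + 1) * t : ℕ)) : ZMod n) : ℤ)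
        + v (((((k + 1) * t : ℕ)) : ZMod n) + 1)
        = c + v (((((k + 1) * t : ℕ)) : ZMod n) + ((k + 1 : ℕ) : ZMod n)) := by
      exact_mod_cast congrArg (Nat.cast : ℕ → ℤ) h
    linarith [hz]
  have hstep3 : ∀ t : ℕ, u (t + 3) = -u t := by
    intro t
    have h0 := hrec t
    have h1 := hrec (t + 1)
    have : t + 1 + 2 = t + 3 := by omega
    rw [this] at h1
    have : t + 1 + 1 = t + 2 := by omega
    rw [this] at h1
    linarith
  have hiter : ∀ j t : ℕ, u (t + 3 * j) = (-1) ^ j * u t := by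
    intro j
    induction j with
    | zero => intro t; simp
    | succ j ih =>
      intro t
      have : t + 3 * (j + 1) = (t + 3 * j) + 3 := by omega
      rw [this, hstep3, ih]
      ring
  have hper : u (0 + 3 * n) = u 0 := by
    simp only [hu]
    congr 2
    have : (k + 1) * (0 + 3 * n) = (3 * (k + 1)) * n := by ring
    rw [this]
    push_cast [ZMod.natCast_self]
    ring
  have hodd' : ((-1 : ℤ)) ^ n = -1 := Odd.neg_one_pow ⟨k, hk⟩
  have h0 : u 0 = 0 := by
    have := hiter n 0
    rw [hper, hodd'] at this
    linarith
  have hv0 : v 0 = c := by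
    have : (v (((k + 1) * 0 : ℕ) : ZMod n) : ℤ) - c = 0 := h0
    simp only [Nat.mul_zero, Nat.cast_zero] at this
    exact_mod_cast sub_eq_zero.mp this
  have := hinj (a₁ := Sum.inl 0) (a₂ := Sum.inr (Sum.inr ())) (by simpa using hv0)
  simp at this
end

section
/- For even n ≥ 6, define f* on all 2n+1 nodes by: f*(v_i) = f(v_i) for 1 ≤ i ≤ n/2, f*(v_{n/2+i}) = 2n+2 - f*(v_i) for 1 ≤ i ≤ n/2, f*(m_i) = 3n+3 - f*(v_i) - f*(v_{i+1}) (indices mod n, v_{n+1} = v_1), and f*(c) = n+1. Then every diagonal pair satisfies f*(v_i) + f*(v_{n/2+i}) = 2n+2 and f*(m_i) + f*(m_{n/2+i}) = 2n+2 for all 1 ≤ i ≤ n/2. -/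
/-- The construction map on the first `n/2` vertices. -/
def fval (n i : ℕ) : ℕ :=
  if i = 1 then n - 1
  else if i = 2 then 2 * n + 1
  else if i % 2 = 0 then n + i
  else i - 1

/-- The extended vertex labeling `f*` on all vertices `1 ≤ i ≤ n`. -/
def fv (n i : ℕ) : ℕ :=
  if i ≤ n / 2 then fval n i else 2 * n + 2 - fval n (i - n / 2)

/-- The midpoint labeling `f*(m_i) = 3n+3 - f*(v_i) - f*(v_{i+1})`, with `v_{n+1} = v_1`. -/
def fm (n i : ℕ) : ℕ :=
  3 * n + 3 - fv n i - fv n (if i = n then 1 else i + 1)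

lemma fval_bound (n i : ℕ) (hn : 6 ≤ n) (h1 : 1 ≤ i) (h2 : i ≤ n / 2) :
    1 ≤ fval n i ∧ fval n i ≤ 2 * n + 1 := by
  unfold fval; split_ifs <;> omega

lemma fval_half (n : ℕ) (hn : 6 ≤ n) : fval n (n / 2) ≤ n + n / 2 := by
  unfold fval; split_ifs <;> omega

lemma adj_bound (n j : ℕ) (hn : 6 ≤ n) (h1 : 1 ≤ j) (h2 : j + 1 ≤ n / 2) :
    n + 1 ≤ fval n j + fval n (j + 1) ∧ fval n j + fval n (j + 1) ≤ 3 * n + 3 := by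
  unfold fval; split_ifs <;> omega

lemma pairA (n i : ℕ) (hn : 6 ≤ n) (h1 : 1 ≤ i) (h2 : i ≤ n / 2) :
    fv n i + fv n (n / 2 + i) = 2 * n + 2 := by
  have hb := fval_bound n i hn h1 h2
  unfold fv
  rw [if_pos h2, if_neg (by omega), show n / 2 + i - n / 2 = i from by omega]
  omega

theorem diagonal_pair_sums (n : ℕ) (hev : n % 2 = 0) (hn : 6 ≤ n) :
    ∀ i : ℕ, 1 ≤ i → i ≤ n / 2 →
      fv n i + fv n (n / 2 + i) = 2 * n + 2 ∧ fm n i + fm n (n / 2 + i) = 2 * n + 2 := by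
  intro i h1 h2
  have hA := pairA n i hn h1 h2
  refine ⟨hA, ?_⟩
  unfold fm
  have hne : i ≠ n := by omega
  rw [if_neg hne]
  by_cases hi : i = n / 2
  · subst hi
    rw [if_pos (show n / 2 + n / 2 = n by omega)]
    have hA1 := pairA n 1 hn le_rfl (by omega)
    have e1 : fv n (n / 2) = fval n (n / 2) := by unfold fv; rw [if_pos le_rfl]
    have e2 : fv n 1 = fval n 1 := by unfold fv; rw [if_pos (by omega)]
    have e3 : fval n 1 = n - 1 := by unfold fval; simp
    have hhalf := fval_half n hn
    have hb := fval_bound n (n / 2) hn (by omega) le_rfl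
    omega
  · have hlt : i < n / 2 := lt_of_le_of_ne h2 hi
    rw [if_neg (show n / 2 + i ≠ n by omega),
        show n / 2 + i + 1 = n / 2 + (i + 1) from by omega]
    have hA2 := pairA n (i + 1) hn (by omega) (by omega)
    have e1 : fv n i = fval n i := by unfold fv; rw [if_pos h2]
    have e2 : fv n (i + 1) = fval n (i + 1) := by unfold fv; rw [if_pos (by omega)]
    have hab := adj_bound n i hn h1 (by omega)
    omega
end

section
/- For even n ≥ 8: if n/2 is even then f*(m_{n/2}) = n/2 and f*(m_n) = 3n/2 + 2; if n/2 is odd then f*(m_{n/2}) = 3n/2 + 1 and f*(m_n) = n/2 + 1. In both cases f*(m_{n/2}) + f*(m_n) = 2n + 2. -/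
theorem special_midpoints (n : ℕ) (hev : n % 2 = 0) (hn : 8 ≤ n) :
    ((n / 2) % 2 = 0 → fm n (n / 2) = n / 2 ∧ fm n n = 3 * n / 2 + 2) ∧
    ((n / 2) % 2 = 1 → fm n (n / 2) = 3 * n / 2 + 1 ∧ fm n n = n / 2 + 1) ∧
    fm n (n / 2) + fm n n = 2 * n + 2 := by
  obtain ⟨k, rfl⟩ : ∃ k, n = 2 * k := ⟨n / 2, by omega⟩
  have hk : 2 * k / 2 = k := by omega
  have hk4 : 4 ≤ k := by omega
  have hfk : fval (2 * k) k = if k % 2 = 0 then 2 * k + k else k - 1 := by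
    rw [fval, if_neg (by omega), if_neg (by omega)]
  have h1 : fv (2 * k) k = if k % 2 = 0 then 2 * k + k else k - 1 := by
    rw [fv, hk, if_pos le_rfl, hfk]
  have h2 : fv (2 * k) (k + 1) = 2 * (2 * k) + 2 - fval (2 * k) 1 := by
    rw [fv, hk, if_neg (by omega)]
    have : k + 1 - k = 1 := by omega
    rw [this]
  have h3 : fv (2 * k) (2 * k) = 2 * (2 * k) + 2 - fval (2 * k) k := by
    rw [fv, hk, if_neg (by omega)]
    have : 2 * k - k = k := by omega
    rw [this]
  have h4 : fv (2 * k) 1 = fval (2 * k) 1 := by rw [fv, hk, if_pos (by omega)]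
  have h5 : fval (2 * k) 1 = 2 * k - 1 := by rw [fval, if_pos rfl]
  rw [fm, fm, hk, if_neg (by omega), if_pos rfl, h1, h2, h3, h4, h5, hfk]
  rcases Nat.mod_two_eq_zero_or_one k with h | h <;> simp [h] <;> omega
end

section
/- For every even n ≥ 4, a magic n-gon exists. -/
namespace MagicNGonAux

def A0 (n j : ℕ) : ℕ :=
  if j = 0 then n - 1 else if j = 1 then 2*n+1
  else if j % 2 = 0 then j else n + j + 1

def M0 (n j : ℕ) : ℕ :=
  if j = 0 then 3 else if j = 1 then n
  else if j = n/2 - 1 then (if (n/2) % 2 = 0 then n/2 else 3*(n/2)+1)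
  else 2*n + 1 - 2*j

def A (n j : ℕ) : ℕ := if j < n/2 then A0 n j else 2*n+2 - A0 n (j - n/2)
def M (n j : ℕ) : ℕ := if j < n/2 then M0 n j else 2*n+2 - M0 n (j - n/2)

variable {n h : ℕ}

lemma A0spec (j : ℕ) :
    (j = 0 ∧ A0 n j = n - 1) ∨ (j = 1 ∧ A0 n j = 2*n+1) ∨
    (2 ≤ j ∧ j % 2 = 0 ∧ A0 n j = j) ∨ (2 ≤ j ∧ j % 2 = 1 ∧ A0 n j = n+j+1) := by
  simp only [A0]; split_ifs <;> omega

lemma M0spec (hh : n = 2*h) (j : ℕ) :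
    (j = 0 ∧ M0 n j = 3) ∨ (j = 1 ∧ M0 n j = n) ∨
    (2 ≤ j ∧ j = h-1 ∧ h % 2 = 0 ∧ M0 n j = h) ∨
    (2 ≤ j ∧ j = h-1 ∧ h % 2 = 1 ∧ M0 n j = 3*h+1) ∨
    (2 ≤ j ∧ j ≠ h-1 ∧ M0 n j = 2*n+1-2*j) := by
  have hn2 : n/2 = h := by omega
  simp only [M0, hn2]; split_ifs <;> omega

lemma Aeq (hh : n = 2*h) (j : ℕ) :
    A n j = if j < h then A0 n j else 2*n+2 - A0 n (j - h) := by
  have hn2 : n/2 = h := by omega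
  simp only [A, hn2]

lemma Meq (hh : n = 2*h) (j : ℕ) :
    M n j = if j < h then M0 n j else 2*n+2 - M0 n (j - h) := by
  have hn2 : n/2 = h := by omega
  simp only [M, hn2]

lemma boundsA (hh : n = 2*h) (h3 : 3 ≤ h) {j : ℕ} (hj : j < n) :
    1 ≤ A n j ∧ A n j ≤ 2*n+1 := by
  rw [Aeq hh]
  rcases Nat.lt_or_ge j h with hl | hg
  · rw [if_pos hl]; have := A0spec (n := n) j; omega
  · rw [if_neg (by omega)]; have := A0spec (n := n) (j - h); omega

lemma boundsM (hh : n = 2*h) (h3 : 3 ≤ h) {j : ℕ} (hj : j < n) :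
    1 ≤ M n j ∧ M n j ≤ 2*n+1 := by
  rw [Meq hh]
  rcases Nat.lt_or_ge j h with hl | hg
  · rw [if_pos hl]; have := M0spec hh j; omega
  · rw [if_neg (by omega)]; have := M0spec hh (j - h); omega

lemma side (hh : n = 2*h) (h3 : 3 ≤ h) {j : ℕ} (hj : j < n) :
    A n j + M n j + A n ((j+1) % n) = 3*n+3 := by
  rcases Nat.lt_or_ge (j+1) h with hr | hr
  · rw [Nat.mod_eq_of_lt (by omega), Aeq hh, Meq hh, Aeq hh,
      if_pos (by omega : j < h), if_pos (by omega : j < h), if_pos hr]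
    have s1 := A0spec (n := n) j
    have s2 := A0spec (n := n) (j+1)
    have s3 := M0spec hh j
    omega
  · rcases Nat.lt_or_ge j h with hl | hg
    · have hj1 : j + 1 = h := by omega
      rw [Nat.mod_eq_of_lt (by omega), Aeq hh, Meq hh, Aeq hh,
        if_pos hl, if_pos hl, if_neg (by omega), hj1]
      have e0 : h - h = 0 := by omega
      rw [e0]
      have s1 := A0spec (n := n) j
      have s2 := A0spec (n := n) 0
      have s3 := M0spec hh j
      omega
    · obtain ⟨k, rfl⟩ : ∃ k, j = h + k := ⟨j - h, by omega⟩
      rcases Nat.lt_or_ge (h + k + 1) n with hc | hc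
      · rw [Nat.mod_eq_of_lt hc, Aeq hh, Meq hh, Aeq hh,
          if_neg (by omega), if_neg (by omega), if_neg (by omega)]
        have e1 : h + k - h = k := by omega
        have e2 : h + k + 1 - h = k + 1 := by omega
        rw [e1, e2]
        have s1 := A0spec (n := n) k
        have s2 := A0spec (n := n) (k+1)
        have s3 := M0spec hh k
        omega
      · have hk : k = h - 1 := by omega
        have e : (h + k + 1) % n = 0 := by
          have : h + k + 1 = n := by omega
          simp [this]
        rw [e, Aeq hh, Meq hh, Aeq hh,
          if_neg (by omega), if_neg (by omega), if_pos (by omega : (0:ℕ) < h)]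
        have e1 : h + k - h = k := by omega
        rw [e1]
        have s1 := A0spec (n := n) k
        have s2 := A0spec (n := n) 0
        have s3 := M0spec hh k
        omega

lemma diagA (hh : n = 2*h) (h3 : 3 ≤ h) {j : ℕ} (hj : j < n) :
    A n j + A n ((j + h) % n) = 2*n+2 := by
  rcases Nat.lt_or_ge j h with hl | hg
  · rw [Nat.mod_eq_of_lt (by omega), Aeq hh, Aeq hh, if_pos hl, if_neg (by omega)]
    have e1 : j + h - h = j := by omega
    rw [e1]
    have s1 := A0spec (n := n) j
    omega
  · obtain ⟨k, rfl⟩ : ∃ k, j = h + k := ⟨j - h, by omega⟩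
    have e : (h + k + h) % n = k := by
      have : h + k + h = k + n := by omega
      rw [this, Nat.add_mod_right, Nat.mod_eq_of_lt (by omega)]
    rw [e, Aeq hh, Aeq hh, if_neg (by omega), if_pos (by omega)]
    have e1 : h + k - h = k := by omega
    rw [e1]
    have s1 := A0spec (n := n) k
    omega

lemma diagM (hh : n = 2*h) (h3 : 3 ≤ h) {j : ℕ} (hj : j < n) :
    M n j + M n ((j + h) % n) = 2*n+2 := by
  rcases Nat.lt_or_ge j h with hl | hg
  · rw [Nat.mod_eq_of_lt (by omega), Meq hh, Meq hh, if_pos hl, if_neg (by omega)]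
    have e1 : j + h - h = j := by omega
    rw [e1]
    have s1 := M0spec hh j
    omega
  · obtain ⟨k, rfl⟩ : ∃ k, j = h + k := ⟨j - h, by omega⟩
    have e : (h + k + h) % n = k := by
      have : h + k + h = k + n := by omega
      rw [this, Nat.add_mod_right, Nat.mod_eq_of_lt (by omega)]
    rw [e, Meq hh, Meq hh, if_neg (by omega), if_pos (by omega)]
    have e1 : h + k - h = k := by omega
    rw [e1]
    have s1 := M0spec hh k
    omega

lemma surj_core (hh : n = 2*h) (h3 : 3 ≤ h) {u : ℕ} (h1 : 1 ≤ u) (h2 : u ≤ n) :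
    ∃ j, j < n ∧ (A n j = u ∨ M n j = u) := by
  rcases Nat.even_or_odd u with he | ho
  · have hue : u % 2 = 0 := Nat.even_iff.mp he
    by_cases hn' : u = n
    · refine ⟨1, by omega, Or.inr ?_⟩
      rw [Meq hh, if_pos (by omega)]
      have := M0spec hh 1; omega
    · by_cases hsm : u ≤ h - 1
      · refine ⟨u, by omega, Or.inl ?_⟩
        rw [Aeq hh, if_pos (by omega)]
        have := A0spec (n := n) u; omega
      · by_cases hmid : u ≤ h + 1
        · by_cases hp : h % 2 = 0
          · refine ⟨h - 1, by omega, Or.inr ?_⟩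
            rw [Meq hh, if_pos (by omega)]
            have := M0spec hh (h-1); omega
          · refine ⟨n - 1, by omega, Or.inr ?_⟩
            rw [Meq hh, if_neg (by omega)]
            have e : n - 1 - h = h - 1 := by omega
            rw [e]
            have := M0spec hh (h-1); omega
        · refine ⟨h + (n + 1 - u), by omega, Or.inl ?_⟩
          rw [Aeq hh, if_neg (by omega)]
          have e : h + (n + 1 - u) - h = n + 1 - u := by omega
          rw [e]
          have := A0spec (n := n) (n + 1 - u); omega
  · have huo : u % 2 = 1 := Nat.odd_iff.mp ho
    by_cases h1' : u = 1
    · refine ⟨h + 1, by omega, Or.inl ?_⟩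
      rw [Aeq hh, if_neg (by omega)]
      have e : h + 1 - h = 1 := by omega
      rw [e]
      have := A0spec (n := n) 1; omega
    · by_cases h3' : u = 3
      · refine ⟨0, by omega, Or.inr ?_⟩
        rw [Meq hh, if_pos (by omega)]
        have := M0spec hh 0; omega
      · by_cases hn1 : u = n - 1
        · refine ⟨0, by omega, Or.inl ?_⟩
          rw [Aeq hh, if_pos (by omega)]
          have := A0spec (n := n) 0; omega
        · refine ⟨h + (u - 1)/2, by omega, Or.inr ?_⟩
          rw [Meq hh, if_neg (by omega)]
          have e : h + (u-1)/2 - h = (u-1)/2 := by omega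
          rw [e]
          have := M0spec hh ((u-1)/2); omega

end MagicNGonAux

namespace MagicNGonAux

def v4 : ZMod 4 → ℕ := fun i => if i = 0 then 2 else if i = 1 then 4 else if i = 2 then 8 else 6
def m4 : ZMod 4 → ℕ := fun i => if i = 0 then 9 else if i = 1 then 3 else if i = 2 then 1 else 7

lemma magic4 : IsMagicNGon 4 v4 m4 5 15 := by unfold IsMagicNGon; decide

end MagicNGonAux

open MagicNGonAux

theorem even_magic_ngon_exists (n : ℕ) [NeZero n] (hev : n % 2 = 0) (hn : 4 ≤ n) :
    ∃ (v m : ZMod n → ℕ) (c s : ℕ), IsMagicNGon n v m c s := by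
  by_cases h4 : n = 4
  · subst h4
    exact ⟨v4, m4, 5, 15, magic4⟩
  · obtain ⟨h, hh⟩ : ∃ h, n = 2*h := ⟨n/2, by omega⟩
    have h3 : 3 ≤ h := by omega
    have hn1 : 1 < n := by omega
    haveI : Fact (1 < n) := ⟨hn1⟩
    refine ⟨fun i => A n i.val, fun i => M n i.val, n+1, 3*n+3, ?_, ?_, ?_, ?_, ?_, ?_⟩
    · -- injectivity
      set F : ZMod n ⊕ (ZMod n ⊕ Unit) → ℕ :=
        Sum.elim (fun i => A n i.val) (Sum.elim (fun i => M n i.val) (fun _ : Unit => n+1))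
        with hF
      have hmem : ∀ x, F x ∈ Finset.Icc 1 (2*n+1) := by
        rintro (i | i | _)
        · have := boundsA hh h3 (ZMod.val_lt i)
          simp only [hF, Sum.elim_inl, Finset.mem_Icc]; omega
        · have := boundsM hh h3 (ZMod.val_lt i)
          simp only [hF, Sum.elim_inr, Sum.elim_inl, Finset.mem_Icc]; omega
        · simp only [hF, Sum.elim_inr, Finset.mem_Icc]; omega
      have hvalcast : ∀ j : ℕ, j < n → ((j : ZMod n)).val = j := by
        intro j hj; rw [ZMod.val_natCast, Nat.mod_eq_of_lt hj]
      have hsurj : ∀ t ∈ Finset.Icc 1 (2*n+1), ∃ x, F x = t := by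
        intro t ht
        rw [Finset.mem_Icc] at ht
        by_cases hc : t = n+1
        · exact ⟨Sum.inr (Sum.inr ()), by simp [hF, hc]⟩
        · rcases le_or_gt t n with htn | htn
          · obtain ⟨j, hj, hAM⟩ := surj_core hh h3 (by omega) htn
            rcases hAM with hA | hM
            · exact ⟨Sum.inl (j : ZMod n), by simp only [hF, Sum.elim_inl, hvalcast j hj, hA]⟩
            · exact ⟨Sum.inr (Sum.inl (j : ZMod n)),
                by simp only [hF, Sum.elim_inr, Sum.elim_inl, hvalcast j hj, hM]⟩
          · have hu1 : 1 ≤ 2*n+2-t := by omega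
            have hu2 : 2*n+2-t ≤ n := by omega
            obtain ⟨j, hj, hAM⟩ := surj_core hh h3 hu1 hu2
            have hjh : (j + h) % n < n := Nat.mod_lt _ (by omega)
            rcases hAM with hA | hM
            · refine ⟨Sum.inl (((j + h) % n : ℕ) : ZMod n), ?_⟩
              simp only [hF, Sum.elim_inl, hvalcast _ hjh]
              have := diagA hh h3 hj
              omega
            · refine ⟨Sum.inr (Sum.inl (((j + h) % n : ℕ) : ZMod n)), ?_⟩
              simp only [hF, Sum.elim_inr, Sum.elim_inl, hvalcast _ hjh]
              have := diagM hh h3 hj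
              omega
      have himg : Finset.image F Finset.univ = Finset.Icc 1 (2*n+1) := by
        apply Finset.Subset.antisymm
        · exact Finset.image_subset_iff.mpr (fun x _ => hmem x)
        · intro t ht
          obtain ⟨x, hx⟩ := hsurj t ht
          exact Finset.mem_image.mpr ⟨x, Finset.mem_univ x, hx⟩
      have hcardU : (Finset.univ : Finset (ZMod n ⊕ (ZMod n ⊕ Unit))).card = 2*n+1 := by
        simp only [Finset.card_univ, Fintype.card_sum, Fintype.card_unit, ZMod.card]
        omega
      have hcard : (Finset.image F Finset.univ).card = (Finset.univ : Finset (ZMod n ⊕ (ZMod n ⊕ Unit))).card := by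
        rw [himg, Nat.card_Icc, hcardU]
        omega
      have hinj : Set.InjOn F ↑(Finset.univ : Finset (ZMod n ⊕ (ZMod n ⊕ Unit))) :=
        Finset.card_image_iff.mp hcard
      intro a b hab
      exact hinj (Finset.mem_coe.mpr (Finset.mem_univ a)) (Finset.mem_coe.mpr (Finset.mem_univ b)) hab
    · intro i
      have := boundsA hh h3 (ZMod.val_lt i)
      exact Finset.mem_Icc.mpr ⟨this.1, this.2⟩
    · intro i
      have := boundsM hh h3 (ZMod.val_lt i)
      exact Finset.mem_Icc.mpr ⟨this.1, this.2⟩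
    · rw [Finset.mem_Icc]; omega
    · intro i
      have hv1 : (i + 1).val = (i.val + 1) % n := by
        rw [ZMod.val_add, ZMod.val_one]
      simp only [hv1]
      exact side hh h3 (ZMod.val_lt i)
    · rw [if_pos hev]
      intro i
      have hn2 : n / 2 = h := by omega
      have hv1 : (i + ((n / 2 : ℕ) : ZMod n)).val = (i.val + h) % n := by
        rw [ZMod.val_add, ZMod.val_natCast, Nat.add_mod_mod, hn2]
      simp only [hv1]
      have d1 := diagA hh h3 (ZMod.val_lt i)
      have d2 := diagM hh h3 (ZMod.val_lt i)
      omega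
end

section
/- For even n ≥ 8, the explicitly defined labeling f* is injective, with image exactly {1, 2, ..., 2n+1}. -/
set_option maxHeartbeats 1000000 in
lemma fv_eval1 (n i : ℕ) (h1 : 1 ≤ i) (h2 : i ≤ n / 2) :
    fv n i = if i = 1 then n - 1 else if i = 2 then 2 * n + 1
      else if i % 2 = 0 then n + i else i - 1 := by
  simp only [fv, fval]; split_ifs <;> first | exact False.elim (by assumption) | omega

lemma fv_eval2 (n i : ℕ) (hn : 8 ≤ n) (h1 : n / 2 < i) (h2 : i ≤ n) :
    fv n i = if i - n / 2 = 1 then n + 3 else if i - n / 2 = 2 then 1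
      else if (i - n / 2) % 2 = 0 then n + 2 - (i - n / 2)
      else 2 * n + 3 - (i - n / 2) := by
  simp only [fv, fval]; split_ifs <;> first | exact False.elim (by assumption) | omega

set_option maxHeartbeats 1000000 in
theorem fstar_bijective (n : ℕ) (hev : n % 2 = 0) (hn : 8 ≤ n) :
    let F : Fin n ⊕ Fin n ⊕ Unit → ℕ :=
      Sum.elim (fun i => fv n (i.1 + 1))
        (Sum.elim (fun i => fm n (i.1 + 1)) (fun _ => n + 1))
    Function.Injective F ∧ Set.range F = ↑(Finset.Icc 1 (2 * n + 1)) := by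
  intro F
  have hFv : ∀ (k : ℕ) (hk : k < n), F (Sum.inl ⟨k, hk⟩) = fv n (k + 1) := fun _ _ => rfl
  have hFm : ∀ (k : ℕ) (hk : k < n), F (Sum.inr (Sum.inl ⟨k, hk⟩)) = fm n (k + 1) :=
    fun _ _ => rfl
  have hsurj : ∀ m ∈ Finset.Icc 1 (2 * n + 1), ∃ x, F x = m := by
    intro m hm
    rw [Finset.mem_Icc] at hm
    obtain ⟨hm1, hm2⟩ := hm
    by_cases hmo : m % 2 = 1
    · -- odd values
      by_cases e1 : m = 1
      · refine ⟨Sum.inl ⟨n / 2 + 1, by omega⟩, ?_⟩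
        rw [hFv, fv_eval2 n (n / 2 + 1 + 1) hn (by omega) (by omega)]
        split_ifs <;> first | exact False.elim (by assumption) | omega
      by_cases e2 : m = 3
      · refine ⟨Sum.inr (Sum.inl ⟨0, by omega⟩), ?_⟩
        rw [hFm]; unfold fm
        rw [if_neg (show ¬(0 + 1) = n by omega), fv_eval1 n (0 + 1) (by omega) (by omega), fv_eval1 n (0 + 1 + 1) (by omega) (by omega)]
        split_ifs <;> first | exact False.elim (by assumption) | omega
      by_cases e3 : m + 3 ≤ n
      · refine ⟨Sum.inr (Sum.inl ⟨n / 2 + (m - 1) / 2, by omega⟩), ?_⟩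
        rw [hFm]; unfold fm
        rw [if_neg (show ¬(n / 2 + (m - 1) / 2 + 1) = n by omega), fv_eval2 n (n / 2 + (m - 1) / 2 + 1) hn (by omega) (by omega), fv_eval2 n (n / 2 + (m - 1) / 2 + 1 + 1) hn (by omega) (by omega)]
        split_ifs <;> first | exact False.elim (by assumption) | omega
      by_cases e4 : m + 1 = n
      · refine ⟨Sum.inl ⟨0, by omega⟩, ?_⟩
        rw [hFv, fv_eval1 n (0 + 1) (by omega) (by omega)]
        split_ifs <;> first | exact False.elim (by assumption) | omega
      by_cases e5 : m = n + 1
      · exact ⟨Sum.inr (Sum.inr ()), by rw [e5]; rfl⟩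
      by_cases e6 : m = n + 3
      · refine ⟨Sum.inl ⟨n / 2, by omega⟩, ?_⟩
        rw [hFv, fv_eval2 n (n / 2 + 1) hn (by omega) (by omega)]
        split_ifs <;> first | exact False.elim (by assumption) | omega
      by_cases e7 : m + 3 ≤ 2 * n
      · refine ⟨Sum.inr (Sum.inl ⟨(2 * n + 1 - m) / 2, by omega⟩), ?_⟩
        rw [hFm]; unfold fm
        rw [if_neg (show ¬((2 * n + 1 - m) / 2 + 1) = n by omega), fv_eval1 n ((2 * n + 1 - m) / 2 + 1) (by omega) (by omega), fv_eval1 n ((2 * n + 1 - m) / 2 + 1 + 1) (by omega) (by omega)]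
        split_ifs <;> first | exact False.elim (by assumption) | omega
      by_cases e8 : m + 1 = 2 * n
      · refine ⟨Sum.inr (Sum.inl ⟨n / 2, by omega⟩), ?_⟩
        rw [hFm]; unfold fm
        rw [if_neg (show ¬(n / 2 + 1) = n by omega), fv_eval2 n (n / 2 + 1) hn (by omega) (by omega), fv_eval2 n (n / 2 + 1 + 1) hn (by omega) (by omega)]
        split_ifs <;> first | exact False.elim (by assumption) | omega
      · refine ⟨Sum.inl ⟨1, by omega⟩, ?_⟩
        rw [hFv, fv_eval1 n (1 + 1) (by omega) (by omega)]
        split_ifs <;> first | exact False.elim (by assumption) | omega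
    · -- even values
      by_cases e1 : m = n
      · refine ⟨Sum.inr (Sum.inl ⟨1, by omega⟩), ?_⟩
        rw [hFm]; unfold fm
        rw [if_neg (show ¬(1 + 1) = n by omega), fv_eval1 n (1 + 1) (by omega) (by omega), fv_eval1 n (1 + 1 + 1) (by omega) (by omega)]
        split_ifs <;> first | exact False.elim (by assumption) | omega
      by_cases e2 : m = n + 2
      · refine ⟨Sum.inr (Sum.inl ⟨n / 2 + 1, by omega⟩), ?_⟩
        rw [hFm]; unfold fm
        rw [if_neg (show ¬(n / 2 + 1 + 1) = n by omega), fv_eval2 n (n / 2 + 1 + 1) hn (by omega) (by omega), fv_eval2 n (n / 2 + 1 + 1 + 1) hn (by omega) (by omega)]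
        split_ifs <;> first | exact False.elim (by assumption) | omega
      by_cases hh : n / 2 % 2 = 0
      · -- h even
        by_cases e3 : m + 2 ≤ n
        · by_cases e4 : m = n / 2
          · refine ⟨Sum.inr (Sum.inl ⟨n / 2 - 1, by omega⟩), ?_⟩
            rw [hFm]; unfold fm
            rw [if_neg (show ¬(n / 2 - 1 + 1) = n by omega), fv_eval1 n (n / 2 - 1 + 1) (by omega) (by omega), fv_eval2 n (n / 2 - 1 + 1 + 1) hn (by omega) (by omega)]
            split_ifs <;> first | exact False.elim (by assumption) | omega
          by_cases e5 : m < n / 2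
          · refine ⟨Sum.inl ⟨m, by omega⟩, ?_⟩
            rw [hFv, fv_eval1 n (m + 1) (by omega) (by omega)]
            split_ifs <;> first | exact False.elim (by assumption) | omega
          · refine ⟨Sum.inl ⟨n / 2 + n + 1 - m, by omega⟩, ?_⟩
            rw [hFv, fv_eval2 n (n / 2 + n + 1 - m + 1) hn (by omega) (by omega)]
            split_ifs <;> first | exact False.elim (by assumption) | omega
        · by_cases e4 : m = n + n / 2 + 2
          · refine ⟨Sum.inr (Sum.inl ⟨n - 1, by omega⟩), ?_⟩
            rw [hFm]; unfold fm
            rw [if_pos (show (n - 1 + 1) = n by omega), fv_eval2 n (n - 1 + 1) hn (by omega) (by omega), fv_eval1 n 1 (by omega) (by omega)]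
            split_ifs <;> first | exact False.elim (by assumption) | omega
          by_cases e5 : m < n + n / 2 + 2
          · refine ⟨Sum.inl ⟨m - n - 1, by omega⟩, ?_⟩
            rw [hFv, fv_eval1 n (m - n - 1 + 1) (by omega) (by omega)]
            split_ifs <;> first | exact False.elim (by assumption) | omega
          · refine ⟨Sum.inl ⟨n / 2 + 2 * n + 2 - m, by omega⟩, ?_⟩
            rw [hFv, fv_eval2 n (n / 2 + 2 * n + 2 - m + 1) hn (by omega) (by omega)]
            split_ifs <;> first | exact False.elim (by assumption) | omega
      · -- h odd
        by_cases e3 : m + 2 ≤ n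
        · by_cases e4 : m = n / 2 + 1
          · refine ⟨Sum.inr (Sum.inl ⟨n - 1, by omega⟩), ?_⟩
            rw [hFm]; unfold fm
            rw [if_pos (show (n - 1 + 1) = n by omega), fv_eval2 n (n - 1 + 1) hn (by omega) (by omega), fv_eval1 n 1 (by omega) (by omega)]
            split_ifs <;> first | exact False.elim (by assumption) | omega
          by_cases e5 : m < n / 2 + 1
          · refine ⟨Sum.inl ⟨m, by omega⟩, ?_⟩
            rw [hFv, fv_eval1 n (m + 1) (by omega) (by omega)]
            split_ifs <;> first | exact False.elim (by assumption) | omega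
          · refine ⟨Sum.inl ⟨n / 2 + n + 1 - m, by omega⟩, ?_⟩
            rw [hFv, fv_eval2 n (n / 2 + n + 1 - m + 1) hn (by omega) (by omega)]
            split_ifs <;> first | exact False.elim (by assumption) | omega
        · by_cases e4 : m = n + n / 2 + 1
          · refine ⟨Sum.inr (Sum.inl ⟨n / 2 - 1, by omega⟩), ?_⟩
            rw [hFm]; unfold fm
            rw [if_neg (show ¬(n / 2 - 1 + 1) = n by omega), fv_eval1 n (n / 2 - 1 + 1) (by omega) (by omega), fv_eval2 n (n / 2 - 1 + 1 + 1) hn (by omega) (by omega)]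
            split_ifs <;> first | exact False.elim (by assumption) | omega
          by_cases e5 : m < n + n / 2 + 1
          · refine ⟨Sum.inl ⟨m - n - 1, by omega⟩, ?_⟩
            rw [hFv, fv_eval1 n (m - n - 1 + 1) (by omega) (by omega)]
            split_ifs <;> first | exact False.elim (by assumption) | omega
          · refine ⟨Sum.inl ⟨n / 2 + 2 * n + 2 - m, by omega⟩, ?_⟩
            rw [hFv, fv_eval2 n (n / 2 + 2 * n + 2 - m + 1) hn (by omega) (by omega)]
            split_ifs <;> first | exact False.elim (by assumption) | omega
  -- counting
  have hcardu : (Finset.univ : Finset (Fin n ⊕ Fin n ⊕ Unit)).card = 2 * n + 1 := by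
    simp [Finset.card_univ]; omega
  have himg : Finset.Icc 1 (2 * n + 1) ⊆ Finset.univ.image F := by
    intro m hm
    obtain ⟨x, hx⟩ := hsurj m hm
    exact Finset.mem_image.2 ⟨x, Finset.mem_univ x, hx⟩
  have hcardIcc : (Finset.Icc 1 (2 * n + 1)).card = 2 * n + 1 := by
    rw [Nat.card_Icc]; omega
  have heq : Finset.Icc 1 (2 * n + 1) = Finset.univ.image F := by
    apply Finset.eq_of_subset_of_card_le himg
    calc (Finset.univ.image F).card ≤ Finset.univ.card := Finset.card_image_le
      _ = (Finset.Icc 1 (2 * n + 1)).card := by rw [hcardu, hcardIcc]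
  have hinj : Function.Injective F := by
    have h1 : (Finset.univ.image F).card = (Finset.univ : Finset (Fin n ⊕ Fin n ⊕ Unit)).card := by
      rw [← heq, hcardIcc, hcardu]
    have h2 := Finset.card_image_iff.mp h1
    rw [Finset.coe_univ] at h2
    exact Set.injOn_univ.mp h2
  refine ⟨hinj, ?_⟩
  rw [← Set.image_univ, ← Finset.coe_univ, ← Finset.coe_image, ← heq]
end
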